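/- Hoeffding's covariance identity: for nonnegative random variables X₁, X₂ with finite second moments, joint CDF H(x₁,x₂) and marginal CDFs F₁, F₂, one has Cov(X₁,X₂) = ∫₀^∞ ∫₀^∞ (H(x₁,x₂) − F₁(x₁)F₂(x₂)) dx₁ dx₂. -/

import Mathlib

open MeasureTheory Set

lemma tail_measurable {Ω : Type*} [MeasurableSpace Ω] (μ : Measure Ω) (X : Ω → ℝ) :
    Measurable fun t => μ {ω | t < X ω} :=
  Antitone.measurable (fun _ _ hst => measure_mono fun _ h => lt_of_le_of_lt hst h)

lemma tail_integrable {Ω : Type*} [MeasurableSpace Ω] (μ : Measure Ω) [IsFiniteMeasure μ]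
    {X : Ω → ℝ} (hint : Integrable X μ) (hpos : 0 ≤ᵐ[μ] X) :
    IntegrableOn (fun t => (μ {ω | t < X ω}).toReal) (Ioi 0) volume := by
  constructor
  · exact ((tail_measurable μ X).ennreal_toReal).aestronglyMeasurable
  · rw [hasFiniteIntegral_iff_norm]
    have h1 : ∀ t : ℝ, ENNReal.ofReal ‖(μ {ω | t < X ω}).toReal‖ = μ {ω | t < X ω} := by
      intro t
      rw [Real.norm_of_nonneg ENNReal.toReal_nonneg, ENNReal.ofReal_toReal (measure_ne_top μ _)]
    simp_rw [h1]
    rw [← lintegral_eq_lintegral_meas_lt μ hpos hint.aemeasurable]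
    exact hint.lintegral_lt_top

lemma double_layercake {Ω : Type*} [MeasurableSpace Ω] (μ : Measure Ω) [IsProbabilityMeasure μ]
    (X₁ X₂ : Ω → ℝ) (hX₁ : Measurable X₁) (hX₂ : Measurable X₂)
    (hpos₂ : ∀ ω, 0 ≤ X₂ ω) :
    ∫⁻ x₁ in Ioi (0:ℝ), ∫⁻ x₂ in Ioi (0:ℝ), μ {ω | x₁ < X₁ ω ∧ x₂ < X₂ ω}
      = ∫⁻ ω, ENNReal.ofReal (X₁ ω) * ENNReal.ofReal (X₂ ω) ∂μ := by
  have hinner : ∀ x₁ : ℝ, ∫⁻ x₂ in Ioi (0:ℝ), μ {ω | x₁ < X₁ ω ∧ x₂ < X₂ ω}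
      = ∫⁻ ω, ({ω | x₁ < X₁ ω}).indicator (fun ω => ENNReal.ofReal (X₂ ω)) ω ∂μ := by
    intro x₁
    have hA : MeasurableSet {ω | x₁ < X₁ ω} := measurableSet_lt measurable_const hX₁
    have key := lintegral_eq_lintegral_meas_lt (μ.restrict {ω | x₁ < X₁ ω})
      (Filter.Eventually.of_forall hpos₂) hX₂.aemeasurable
    rw [lintegral_indicator hA, ← key.symm]
    apply lintegral_congr_ae
    filter_upwards with x₂
    rw [Measure.restrict_apply (measurableSet_lt measurable_const hX₂)]
    congr 1
    ext ω
    simp [and_comm]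
  simp_rw [hinner]
  rw [lintegral_lintegral_swap]
  · apply lintegral_congr
    intro ω
    have : ∀ x₁ : ℝ, ({ω' | x₁ < X₁ ω'}).indicator (fun ω' => ENNReal.ofReal (X₂ ω')) ω
        = (Iio (X₁ ω)).indicator (fun _ => ENNReal.ofReal (X₂ ω)) x₁ := by
      intro x₁
      by_cases h : x₁ < X₁ ω <;> simp [Set.indicator, h]
    simp_rw [this]
    rw [lintegral_indicator measurableSet_Iio, Measure.restrict_restrict measurableSet_Iio,
      setLIntegral_const, Iio_inter_Ioi, Real.volume_Ioo, sub_zero, mul_comm]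
  · apply (Measurable.aemeasurable _)
    apply Measurable.indicator
    · exact (ENNReal.measurable_ofReal.comp (hX₂.comp measurable_snd))
    · exact measurableSet_lt measurable_fst (hX₁.comp measurable_snd)

/-- Hoeffding's covariance identity: for nonnegative random variables `X₁, X₂` with
finite second moments, joint CDF `H` and marginal CDFs `F₁, F₂`,
`Cov(X₁,X₂) = ∫₀^∞ ∫₀^∞ (H(x₁,x₂) - F₁(x₁) F₂(x₂)) dx₁ dx₂`. -/
theorem hoeffding_covariance_identity
    {Ω : Type*} [MeasurableSpace Ω] (μ : Measure Ω) [IsProbabilityMeasure μ]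
    (X₁ X₂ : Ω → ℝ) (hX₁ : Measurable X₁) (hX₂ : Measurable X₂)
    (hpos₁ : ∀ ω, 0 ≤ X₁ ω) (hpos₂ : ∀ ω, 0 ≤ X₂ ω)
    (hL₁ : MemLp X₁ 2 μ) (hL₂ : MemLp X₂ 2 μ) :
    (∫ ω, X₁ ω * X₂ ω ∂μ) - (∫ ω, X₁ ω ∂μ) * (∫ ω, X₂ ω ∂μ)
      = ∫ x₁ in Ioi (0:ℝ), ∫ x₂ in Ioi (0:ℝ),
          ((μ {ω | X₁ ω ≤ x₁ ∧ X₂ ω ≤ x₂}).toReal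
            - (μ {ω | X₁ ω ≤ x₁}).toReal * (μ {ω | X₂ ω ≤ x₂}).toReal) := by
  have hint₁ : Integrable X₁ μ := hL₁.integrable one_le_two
  have hint₂ : Integrable X₂ μ := hL₂.integrable one_le_two
  have hint₁₂ : Integrable (fun ω => X₁ ω * X₂ ω) μ := by
    have h := hL₂.smul (φ := X₁) hL₁ (r := 1)
      (hpqr := ⟨by rw [inv_one]; exact ENNReal.inv_two_add_inv_two⟩)
    rw [← memLp_one_iff_integrable]
    exact h
  -- marginal layer cakes
  have hEX₁ : ∫ ω, X₁ ω ∂μ = ∫ x in Ioi (0:ℝ), (μ {ω | x < X₁ ω}).toReal :=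
    hint₁.integral_eq_integral_meas_lt (Filter.Eventually.of_forall hpos₁)
  have hEX₂ : ∫ ω, X₂ ω ∂μ = ∫ x in Ioi (0:ℝ), (μ {ω | x < X₂ ω}).toReal :=
    hint₂.integral_eq_integral_meas_lt (Filter.Eventually.of_forall hpos₂)
  -- the joint tail function
  set G : ℝ → ℝ → ENNReal := fun x₁ x₂ => μ {ω | x₁ < X₁ ω ∧ x₂ < X₂ ω} with hG
  have hG_meas : ∀ x₁, Measurable (G x₁) := fun x₁ =>
    Antitone.measurable (fun _ _ hst => measure_mono fun ω h => ⟨h.1, lt_of_le_of_lt hst h.2⟩)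
  have hG_le : ∀ x₁ x₂, G x₁ x₂ ≤ μ {ω | x₂ < X₂ ω} := fun x₁ x₂ =>
    measure_mono fun ω h => h.2
  -- inner real/lintegral comparison
  have hinner_eq : ∀ x₁ : ℝ, ∫ x₂ in Ioi (0:ℝ), (G x₁ x₂).toReal
      = (∫⁻ x₂ in Ioi (0:ℝ), G x₁ x₂).toReal := by
    intro x₁
    exact integral_toReal ((hG_meas x₁).aemeasurable)
      (Filter.Eventually.of_forall fun x₂ => measure_lt_top μ _)
  have hL2fin : ∫⁻ x₂ in Ioi (0:ℝ), μ {ω | x₂ < X₂ ω} < ⊤ := by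
    rw [← lintegral_eq_lintegral_meas_lt μ (Filter.Eventually.of_forall hpos₂) hX₂.aemeasurable]
    exact hint₂.lintegral_lt_top
  have hinnerL_fin : ∀ x₁ : ℝ, ∫⁻ x₂ in Ioi (0:ℝ), G x₁ x₂ < ⊤ := fun x₁ =>
    lt_of_le_of_lt (lintegral_mono fun x₂ => hG_le x₁ x₂) hL2fin
  have hinnerL_meas : Measurable fun x₁ => ∫⁻ x₂ in Ioi (0:ℝ), G x₁ x₂ :=
    Antitone.measurable (fun s t hst => lintegral_mono fun x₂ =>
      measure_mono fun ω h => ⟨lt_of_le_of_lt hst h.1, h.2⟩)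
  -- double layer cake, in real form
  have hDL := double_layercake μ X₁ X₂ hX₁ hX₂ hpos₂
  have hDLfin : ∫⁻ x₁ in Ioi (0:ℝ), ∫⁻ x₂ in Ioi (0:ℝ), G x₁ x₂ < ⊤ := by
    rw [hG, hDL]
    simp_rw [← ENNReal.ofReal_mul (hpos₁ _)]
    exact hint₁₂.lintegral_lt_top
  have hEX₁₂ : ∫ ω, X₁ ω * X₂ ω ∂μ
      = ∫ x₁ in Ioi (0:ℝ), ∫ x₂ in Ioi (0:ℝ), (G x₁ x₂).toReal := by
    simp_rw [hinner_eq]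
    rw [integral_toReal hinnerL_meas.aemeasurable
      (Filter.Eventually.of_forall hinnerL_fin), hDL]
    simp_rw [← ENNReal.ofReal_mul (hpos₁ _)]
    rw [← ofReal_integral_eq_lintegral_ofReal hint₁₂
      (Filter.Eventually.of_forall fun ω => mul_nonneg (hpos₁ ω) (hpos₂ ω))]
    rw [ENNReal.toReal_ofReal (integral_nonneg fun ω => mul_nonneg (hpos₁ ω) (hpos₂ ω))]
  -- integrability of the pieces
  have hS_int : IntegrableOn (fun x₂ => (μ {ω | x₂ < X₂ ω}).toReal) (Ioi 0) volume :=
    tail_integrable μ hint₂ (Filter.Eventually.of_forall hpos₂)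
  have hT_int : IntegrableOn (fun x₁ => (μ {ω | x₁ < X₁ ω}).toReal) (Ioi 0) volume :=
    tail_integrable μ hint₁ (Filter.Eventually.of_forall hpos₁)
  have hGx_int : ∀ x₁ : ℝ, IntegrableOn (fun x₂ => (G x₁ x₂).toReal) (Ioi 0) volume := by
    intro x₁
    apply Integrable.mono hS_int ((hG_meas x₁).ennreal_toReal).aestronglyMeasurable
    filter_upwards with x₂
    rw [Real.norm_of_nonneg ENNReal.toReal_nonneg, Real.norm_of_nonneg ENNReal.toReal_nonneg]
    exact ENNReal.toReal_mono (measure_ne_top μ _) (hG_le x₁ x₂)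
  have hInner_int : IntegrableOn (fun x₁ => ∫ x₂ in Ioi (0:ℝ), (G x₁ x₂).toReal)
      (Ioi 0) volume := by
    constructor
    · have : (fun x₁ => ∫ x₂ in Ioi (0:ℝ), (G x₁ x₂).toReal)
          = fun x₁ => (∫⁻ x₂ in Ioi (0:ℝ), G x₁ x₂).toReal := funext hinner_eq
      rw [this]
      exact (hinnerL_meas.ennreal_toReal).aestronglyMeasurable
    · rw [hasFiniteIntegral_iff_norm]
      have h1 : ∀ x₁ : ℝ, ENNReal.ofReal ‖∫ x₂ in Ioi (0:ℝ), (G x₁ x₂).toReal‖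
          = ∫⁻ x₂ in Ioi (0:ℝ), G x₁ x₂ := by
        intro x₁
        rw [hinner_eq x₁, Real.norm_of_nonneg ENNReal.toReal_nonneg,
          ENNReal.ofReal_toReal (hinnerL_fin x₁).ne]
      simp_rw [h1]
      exact hDLfin
  have hTS_int : ∀ x₁ : ℝ, IntegrableOn
      (fun x₂ => (μ {ω | x₁ < X₁ ω}).toReal * (μ {ω | x₂ < X₂ ω}).toReal) (Ioi 0) volume :=
    fun x₁ => hS_int.const_mul _
  have hTC_int : IntegrableOn
      (fun x₁ => (μ {ω | x₁ < X₁ ω}).toReal * ∫ x₂ in Ioi (0:ℝ), (μ {ω | x₂ < X₂ ω}).toReal)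
      (Ioi 0) volume := hT_int.mul_const _
  -- pointwise identity between the two integrands
  have hpt : ∀ x₁ x₂ : ℝ,
      (μ {ω | X₁ ω ≤ x₁ ∧ X₂ ω ≤ x₂}).toReal
        - (μ {ω | X₁ ω ≤ x₁}).toReal * (μ {ω | X₂ ω ≤ x₂}).toReal
      = (G x₁ x₂).toReal - (μ {ω | x₁ < X₁ ω}).toReal * (μ {ω | x₂ < X₂ ω}).toReal := by
    intro x₁ x₂
    have hA : MeasurableSet {ω | X₁ ω ≤ x₁} := measurableSet_le hX₁ measurable_const
    have hB : MeasurableSet {ω | X₂ ω ≤ x₂} := measurableSet_le hX₂ measurable_const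
    have e1 : {ω | x₁ < X₁ ω} = {ω | X₁ ω ≤ x₁}ᶜ := by ext ω; simp [not_le]
    have e2 : {ω | x₂ < X₂ ω} = {ω | X₂ ω ≤ x₂}ᶜ := by ext ω; simp [not_le]
    have e3 : {ω | x₁ < X₁ ω ∧ x₂ < X₂ ω} = ({ω | X₁ ω ≤ x₁} ∪ {ω | X₂ ω ≤ x₂})ᶜ := by
      ext ω; simp [not_or, not_le]
    have hcA : (μ {ω | X₁ ω ≤ x₁}ᶜ).toReal = 1 - (μ {ω | X₁ ω ≤ x₁}).toReal := by
      rw [prob_compl_eq_one_sub hA, ENNReal.toReal_sub_of_le prob_le_one ENNReal.one_ne_top,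
        ENNReal.toReal_one]
    have hcB : (μ {ω | X₂ ω ≤ x₂}ᶜ).toReal = 1 - (μ {ω | X₂ ω ≤ x₂}).toReal := by
      rw [prob_compl_eq_one_sub hB, ENNReal.toReal_sub_of_le prob_le_one ENNReal.one_ne_top,
        ENNReal.toReal_one]
    have hcU : (μ ({ω | X₁ ω ≤ x₁} ∪ {ω | X₂ ω ≤ x₂})ᶜ).toReal
        = 1 - (μ ({ω | X₁ ω ≤ x₁} ∪ {ω | X₂ ω ≤ x₂})).toReal := by
      rw [prob_compl_eq_one_sub (hA.union hB),
        ENNReal.toReal_sub_of_le prob_le_one ENNReal.one_ne_top, ENNReal.toReal_one]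
    have hunion : (μ ({ω | X₁ ω ≤ x₁} ∪ {ω | X₂ ω ≤ x₂})).toReal
        + (μ ({ω | X₁ ω ≤ x₁} ∩ {ω | X₂ ω ≤ x₂})).toReal
        = (μ {ω | X₁ ω ≤ x₁}).toReal + (μ {ω | X₂ ω ≤ x₂}).toReal := by
      rw [← ENNReal.toReal_add (measure_ne_top μ _) (measure_ne_top μ _),
        ← ENNReal.toReal_add (measure_ne_top μ _) (measure_ne_top μ _),
        measure_union_add_inter _ hB]
    have hAB : {ω | X₁ ω ≤ x₁ ∧ X₂ ω ≤ x₂} = {ω | X₁ ω ≤ x₁} ∩ {ω | X₂ ω ≤ x₂} := rfl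
    simp only [hG]
    rw [e1, e2, e3, hAB, hcA, hcB, hcU]
    set a := (μ {ω | X₁ ω ≤ x₁}).toReal
    set b := (μ {ω | X₂ ω ≤ x₂}).toReal
    set c := (μ ({ω | X₁ ω ≤ x₁} ∩ {ω | X₂ ω ≤ x₂})).toReal
    set u := (μ ({ω | X₁ ω ≤ x₁} ∪ {ω | X₂ ω ≤ x₂})).toReal
    have : u = a + b - c := by linarith
    rw [this]; ring
  -- rewrite the RHS using the pointwise identity and split the integrals
  calc (∫ ω, X₁ ω * X₂ ω ∂μ) - (∫ ω, X₁ ω ∂μ) * (∫ ω, X₂ ω ∂μ)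
      = ∫ x₁ in Ioi (0:ℝ), (∫ x₂ in Ioi (0:ℝ), (G x₁ x₂).toReal)
          - ((μ {ω | x₁ < X₁ ω}).toReal * ∫ x₂ in Ioi (0:ℝ), (μ {ω | x₂ < X₂ ω}).toReal) := by
        rw [integral_sub hInner_int hTC_int, hEX₁₂, hEX₁, hEX₂, ← integral_mul_const]
    _ = ∫ x₁ in Ioi (0:ℝ), ∫ x₂ in Ioi (0:ℝ),
          ((G x₁ x₂).toReal - (μ {ω | x₁ < X₁ ω}).toReal * (μ {ω | x₂ < X₂ ω}).toReal) := by
        apply setIntegral_congr_fun measurableSet_Ioi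
        intro x₁ _
        dsimp only
        rw [integral_sub (hGx_int x₁) (hTS_int x₁), integral_const_mul]
    _ = ∫ x₁ in Ioi (0:ℝ), ∫ x₂ in Ioi (0:ℝ),
          ((μ {ω | X₁ ω ≤ x₁ ∧ X₂ ω ≤ x₂}).toReal
            - (μ {ω | X₁ ω ≤ x₁}).toReal * (μ {ω | X₂ ω ≤ x₂}).toReal) := by
        apply setIntegral_congr_fun measurableSet_Ioi
        intro x₁ _
        apply setIntegral_congr_fun measurableSet_Ioi
        intro x₂ _
        exact (hpt x₁ x₂).symm
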